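/- arXiv:1904.02778 — 4 statements merged into one kernel-verified Lean document; each statement's English description precedes it below -/
import Mathlib

section
/- Under the hypotheses of the previous bound, if additionally the values E_0,...,E_{N-1} are pairwise distinct and there exists an index i ≥ M (with respect to the increasing ordering of E) such that the corresponding p-value is strictly positive, then the inequality is strict: ∑_{i=0}^{N-1} p_i E_i > A · (sum of the M smallest E_i). -/
/-- Under the hypotheses of the bound of Statement 0, if the `E i` are
pairwise distinct and some `p (σ i) > 0` for an index `i ≥ M` (in the increasing
ordering of `E` given by `σ`), then the inequality is strict. -/
theorem stmt_1 (N M : ℕ) (hMN : M ≤ N) (p E : Fin N → ℝ) (A : ℝ) (hA : 0 < A)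
    (hp : ∀ i, 0 ≤ p i ∧ p i ≤ A) (hsum : ∑ i, p i = M * A)
    (hE : Function.Injective E)
    (σ : Equiv.Perm (Fin N)) (hσ : Monotone (fun i => E (σ i)))
    (hpos : ∃ i : Fin N, M ≤ (i : ℕ) ∧ 0 < p (σ i)) :
    A * ∑ i ∈ Finset.univ.filter (fun i : Fin N => (i : ℕ) < M), E (σ i)
      < ∑ i, p i * E i := by
  obtain ⟨i₀, hi₀M, hi₀pos⟩ := hpos
  have hMlt : M < N := lt_of_le_of_lt hi₀M i₀.isLt
  set m : Fin N := ⟨M, hMlt⟩ with hm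
  set t : ℝ := E (σ m) with ht
  have hsm : StrictMono (fun i => E (σ i)) :=
    hσ.strictMono_of_injective (hE.comp σ.injective)
  set f : Fin N → ℝ :=
    fun i => (p (σ i) - (if (i : ℕ) < M then A else 0)) * (E (σ i) - t) with hf
  -- sum of the ite coefficients
  have hfilter : Finset.univ.filter (fun i : Fin N => (i : ℕ) < M) = Finset.Iio m := by
    ext i
    simp [Fin.lt_def, -Fin.val_fin_lt, hm]
  have hcard : (Finset.univ.filter (fun i : Fin N => (i : ℕ) < M)).card = M := by
    rw [hfilter, Fin.card_Iio]
  have hqsum : ∑ i, p (σ i) = M * A := by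
    rw [Equiv.sum_comp σ p]; exact hsum
  have hqE : ∑ i, p (σ i) * E (σ i) = ∑ i, p i * E i :=
    Equiv.sum_comp σ (fun i => p i * E i)
  have hite1 : ∑ i : Fin N, (if (i : ℕ) < M then A else 0) = M * A := by
    rw [Finset.sum_ite, Finset.sum_const, Finset.sum_const, hcard]
    simp [mul_comm]
  have hite2 : ∑ i : Fin N, (if (i : ℕ) < M then A else 0) * E (σ i)
      = A * ∑ i ∈ Finset.univ.filter (fun i : Fin N => (i : ℕ) < M), E (σ i) := by
    rw [Finset.mul_sum, Finset.sum_filter]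
    congr 1
    ext i
    by_cases h : (i : ℕ) < M <;> simp [h]
  have key : ∑ i, f i
      = ∑ i, p i * E i
        - A * ∑ i ∈ Finset.univ.filter (fun i : Fin N => (i : ℕ) < M), E (σ i) := by
    have expand : ∀ i : Fin N, f i
        = p (σ i) * E (σ i) - p (σ i) * t
          - (if (i : ℕ) < M then A else 0) * E (σ i)
          + (if (i : ℕ) < M then A else 0) * t := by
      intro i; simp only [hf]; ring
    rw [Finset.sum_congr rfl (fun i _ => expand i)]
    rw [Finset.sum_add_distrib, Finset.sum_sub_distrib, Finset.sum_sub_distrib,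
      ← Finset.sum_mul, ← Finset.sum_mul, hqsum, hqE, hite1, hite2]
    ring
  -- find j < M with p (σ j) < A
  have hex : ∃ j : Fin N, (j : ℕ) < M ∧ p (σ j) < A := by
    by_contra hcon
    push_neg at hcon
    have hall : ∀ j ∈ Finset.univ.filter (fun i : Fin N => (i : ℕ) < M), p (σ j) = A := by
      intro j hj
      simp only [Finset.mem_filter] at hj
      exact le_antisymm (hp (σ j)).2 (hcon j hj.2)
    have hsplit := Finset.sum_filter_add_sum_filter_not Finset.univ
      (fun i : Fin N => (i : ℕ) < M) (fun i => p (σ i))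
    rw [Finset.sum_congr rfl hall, Finset.sum_const, hcard] at hsplit
    have hrest : 0 < ∑ i ∈ Finset.univ.filter (fun i : Fin N => ¬ (i : ℕ) < M), p (σ i) := by
      have hmem : i₀ ∈ Finset.univ.filter (fun i : Fin N => ¬ (i : ℕ) < M) := by
        simp only [Finset.mem_filter, Finset.mem_univ, true_and]
        omega
      have := Finset.single_le_sum (f := fun i => p (σ i))
        (fun i _ => (hp (σ i)).1) hmem
      linarith
    rw [hqsum] at hsplit
    simp only [nsmul_eq_mul] at hsplit
    linarith
  obtain ⟨j, hjM, hjA⟩ := hex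
  have hpos : 0 < ∑ i, f i := by
    apply Finset.sum_pos'
    · intro i _
      by_cases h : (i : ℕ) < M
      · have h1 : p (σ i) - A ≤ 0 := by linarith [(hp (σ i)).2]
        have h2 : E (σ i) - t ≤ 0 := by
          have : i ≤ m := by simp [Fin.le_def, hm]; omega
          have := hσ this
          simpa [ht] using sub_nonpos.mpr this
        have h3 := mul_nonneg (neg_nonneg.mpr h1) (neg_nonneg.mpr h2)
        rw [neg_mul_neg] at h3
        simpa [hf, h] using h3
      · have h1 : 0 ≤ p (σ i) := (hp (σ i)).1
        have h2 : 0 ≤ E (σ i) - t := by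
          have : m ≤ i := by simp [Fin.le_def, hm]; omega
          have := hσ this
          simpa [ht] using sub_nonneg.mpr this
        simpa [hf, h] using mul_nonneg h1 h2
    · refine ⟨j, Finset.mem_univ j, ?_⟩
      have h1 : p (σ j) - A < 0 := by linarith
      have h2 : E (σ j) - t < 0 := by
        have : j < m := by simp [Fin.lt_def, hm]; omega
        have := hsm this
        simpa [ht] using sub_neg.mpr this
      simpa [hf, hjM] using mul_pos_of_neg_of_neg h1 h2
  linarith [key, hpos]
end

section
/- In the setting of the previous statement, if additionally the spectrum of H is non-degenerate (all eigenvalues distinct), then equality ∑_{i=0}^{M-1} ⟨a_i, H a_i⟩ = ∑_{i=0}^{M-1} E_i holds if and only if every a_i lies in the span of the eigenvectors corresponding to the M smallest eigenvalues E_0,...,E_{M-1}. -/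
open scoped InnerProductSpace

lemma key_real (N M : ℕ) (hMN : M ≤ N) (E : Fin N → ℝ) (hE : StrictMono E)
    (p : Fin N → ℝ) (hp0 : ∀ j, 0 ≤ p j) (hp1 : ∀ j, p j ≤ 1)
    (hmass : ∑ j, p j = M) :
    (∑ j, E j * p j = ∑ j ∈ Finset.univ.map (Fin.castLEEmb hMN), E j) ↔
      ∀ j ∉ Finset.univ.map (Fin.castLEEmb hMN), p j = 0 := by
  set s : Finset (Fin N) := Finset.univ.map (Fin.castLEEmb hMN) with hs
  have hmem : ∀ j : Fin N, j ∈ s ↔ (j : ℕ) < M := by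
    intro j
    simp only [hs, Finset.mem_map, Finset.mem_univ, true_and, Fin.castLEEmb_apply]
    constructor
    · rintro ⟨i, rfl⟩; exact i.2
    · intro h; exact ⟨⟨j, h⟩, rfl⟩
  have hcard : s.card = M := by simp [hs]
  have hsum_s : ∑ j ∈ s, p j + ∑ j ∈ sᶜ, p j = M := by
    rw [Finset.sum_add_sum_compl]; exact hmass
  constructor
  · intro heq
    rcases eq_or_lt_of_le hMN with rfl | hlt
    · intro j hj; exact absurd ((hmem j).2 j.2) hj
    · set t : ℝ := E ⟨M, hlt⟩ with ht
      have expandA : ∑ j ∈ s, (t - E j) * (1 - p j) =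
          (t * s.card - ∑ j ∈ s, E j) - (t * ∑ j ∈ s, p j - ∑ j ∈ s, E j * p j) := by
        simp only [sub_mul, mul_sub, mul_one, Finset.sum_sub_distrib, Finset.mul_sum,
          Finset.sum_const, nsmul_eq_mul]
        ring
      have expandB : ∑ j ∈ sᶜ, (E j - t) * p j =
          ∑ j ∈ sᶜ, E j * p j - t * ∑ j ∈ sᶜ, p j := by
        simp only [sub_mul, Finset.sum_sub_distrib, Finset.mul_sum]
      have h1 : ∑ j ∈ s, E j * p j + ∑ j ∈ sᶜ, E j * p j = ∑ j, E j * p j :=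
        Finset.sum_add_sum_compl s _
      have hAB : ∑ j ∈ s, (t - E j) * (1 - p j) + ∑ j ∈ sᶜ, (E j - t) * p j = 0 := by
        rw [expandA, expandB, hcard]
        have h2 : t * ∑ j ∈ s, p j + t * ∑ j ∈ sᶜ, p j = t * M := by
          rw [← mul_add, hsum_s]
        linarith [heq, h1, h2]
      have hAnn : ∀ j ∈ s, 0 ≤ (t - E j) * (1 - p j) := by
        intro j hj
        have hjM : j < (⟨M, hlt⟩ : Fin N) := by
          rw [Fin.lt_def]; exact (hmem j).1 hj
        have := hE hjM
        have := hp1 j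
        nlinarith
      have hBnn : ∀ j ∈ sᶜ, 0 ≤ (E j - t) * p j := by
        intro j hj
        have hjM : (⟨M, hlt⟩ : Fin N) ≤ j := by
          rw [Fin.le_def]
          exact le_of_not_gt fun h => (Finset.mem_compl.mp hj) ((hmem j).2 h)
        have := hE.monotone hjM
        have := hp0 j
        nlinarith
      have hA0 : ∑ j ∈ s, (t - E j) * (1 - p j) = 0 := by
        have hB : 0 ≤ ∑ j ∈ sᶜ, (E j - t) * p j := Finset.sum_nonneg hBnn
        have hA : 0 ≤ ∑ j ∈ s, (t - E j) * (1 - p j) := Finset.sum_nonneg hAnn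
        linarith
      have hone : ∀ j ∈ s, p j = 1 := by
        intro j hj
        have hterm := (Finset.sum_eq_zero_iff_of_nonneg hAnn).mp hA0 j hj
        have hjM : j < (⟨M, hlt⟩ : Fin N) := by rw [Fin.lt_def]; exact (hmem j).1 hj
        have hEt := hE hjM
        rcases mul_eq_zero.mp hterm with h | h
        · linarith
        · linarith
      have hzero : ∑ j ∈ sᶜ, p j = 0 := by
        have : ∑ j ∈ s, p j = M := by
          rw [Finset.sum_congr rfl hone, Finset.sum_const, hcard]; simp
        linarith
      intro j hj
      exact (Finset.sum_eq_zero_iff_of_nonneg fun j _ => hp0 j).mp hzero j (Finset.mem_compl.mpr hj)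
  · intro h0
    have hone : ∀ j ∈ s, p j = 1 := by
      have hzero : ∑ j ∈ sᶜ, p j = 0 :=
        Finset.sum_eq_zero fun j hj => h0 j (Finset.mem_compl.mp hj)
      have : ∑ j ∈ s, (1 - p j) = 0 := by
        rw [Finset.sum_sub_distrib, Finset.sum_const, hcard]
        have : ∑ j ∈ s, p j = M := by linarith [hsum_s, hzero]
        simp [this]
      intro j hj
      have := (Finset.sum_eq_zero_iff_of_nonneg (fun j _ => by linarith [hp1 j])).mp this j hj
      linarith
    rw [← Finset.sum_add_sum_compl s (fun j => E j * p j)]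
    have : ∑ j ∈ sᶜ, E j * p j = 0 :=
      Finset.sum_eq_zero fun j hj => by rw [h0 j (Finset.mem_compl.mp hj), mul_zero]
    rw [this, add_zero]
    exact Finset.sum_congr rfl fun j hj => by rw [hone j hj, mul_one]

lemma conj_mul_norm (z : ℂ) : (starRingEnd ℂ) z * z = ((‖z‖^2 : ℝ) : ℂ) := by
  rw [mul_comm, Complex.mul_conj, Complex.normSq_eq_norm_sq]

/-- in the setting of Statement 3, if the spectrum is non-degenerate
(`E` strictly increasing), then `∑_{i<M} ⟨a i, H (a i)⟩ = ∑_{i<M} E i` holds iff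
every `a i` lies in the span of the eigenvectors of the `M` smallest eigenvalues. -/
theorem stmt_4 {V : Type*} [NormedAddCommGroup V] [InnerProductSpace ℂ V]
    (N M : ℕ) (hMN : M ≤ N)
    (e : OrthonormalBasis (Fin N) ℂ V) (H : V →ₗ[ℂ] V) (E : Fin N → ℝ)
    (hE : StrictMono E) (heig : ∀ i, H (e i) = (E i : ℂ) • e i)
    (a : Fin M → V) (ha : Orthonormal ℂ a) :
    (∑ i : Fin M, (⟪a i, H (a i)⟫_ℂ).re = ∑ i : Fin M, E (Fin.castLE hMN i)) ↔
      ∀ i : Fin M, a i ∈ Submodule.span ℂ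
        (Set.range (fun j : Fin M => e (Fin.castLE hMN j))) := by
  classical
  set s : Finset (Fin N) := Finset.univ.map (Fin.castLEEmb hMN) with hs
  set p : Fin N → ℝ := fun j => ∑ i, ‖⟪e j, a i⟫_ℂ‖^2 with hp
  -- step 1: expand each expectation value
  have h1 : ∀ i, (⟪a i, H (a i)⟫_ℂ).re = ∑ j, E j * ‖⟪e j, a i⟫_ℂ‖^2 := by
    intro i
    have hH : H (a i) = ∑ j, ((E j : ℂ) * ⟪e j, a i⟫_ℂ) • e j := by
      conv_lhs => rw [← e.sum_repr' (a i)]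
      rw [map_sum]
      refine Finset.sum_congr rfl fun j _ => ?_
      rw [map_smul, heig, smul_smul, mul_comm]
    rw [hH, inner_sum, Complex.re_sum]
    refine Finset.sum_congr rfl fun j _ => ?_
    rw [inner_smul_right]
    have hc : ⟪a i, e j⟫_ℂ = (starRingEnd ℂ) ⟪e j, a i⟫_ℂ := (inner_conj_symm _ _).symm
    rw [hc, mul_assoc, Complex.mul_conj, ← Complex.ofReal_mul, Complex.ofReal_re,
      Complex.normSq_eq_norm_sq]
  -- Parseval: each a i has total weight 1
  have hpar : ∀ i, ∑ j, ‖⟪e j, a i⟫_ℂ‖^2 = 1 := by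
    intro i
    have h := e.sum_inner_mul_inner (a i) (a i)
    have hself : ⟪a i, a i⟫_ℂ = 1 := by
      rw [inner_self_eq_norm_sq_to_K, ha.1 i]; norm_num
    rw [hself] at h
    have h2 : ∑ j, ((‖⟪e j, a i⟫_ℂ‖^2 : ℝ) : ℂ) = 1 := by
      rw [← h]
      refine Finset.sum_congr rfl fun j _ => ?_
      have hc : ⟪a i, e j⟫_ℂ = (starRingEnd ℂ) ⟪e j, a i⟫_ℂ := (inner_conj_symm _ _).symm
      rw [hc, conj_mul_norm]
    exact_mod_cast h2
  -- mass
  have hmass : ∑ j, p j = M := by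
    rw [hp]
    rw [Finset.sum_comm]
    rw [Finset.sum_congr rfl fun i _ => hpar i]
    simp
  -- Bessel
  have hp1 : ∀ j, p j ≤ 1 := by
    intro j
    have h := ha.sum_inner_products_le (e j) (s := Finset.univ)
    rw [e.orthonormal.1 j] at h
    calc p j = ∑ i, ‖⟪a i, e j⟫_ℂ‖^2 :=
          Finset.sum_congr rfl fun i _ => by rw [norm_inner_symm]
      _ ≤ 1 := by simpa using h
  have hp0 : ∀ j, 0 ≤ p j := fun j => Finset.sum_nonneg fun i _ => sq_nonneg _
  -- rewrite both sides
  have hLHS : ∑ i : Fin M, (⟪a i, H (a i)⟫_ℂ).re = ∑ j, E j * p j := by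
    rw [Finset.sum_congr rfl fun i _ => h1 i, Finset.sum_comm]
    exact Finset.sum_congr rfl fun j _ => (Finset.mul_sum _ _ _).symm
  have hRHS : ∑ i : Fin M, E (Fin.castLE hMN i) = ∑ j ∈ s, E j := by
    rw [hs, Finset.sum_map]; rfl
  rw [hLHS, hRHS, key_real N M hMN E hE p hp0 hp1 hmass]
  -- membership characterization
  have hmemspan : ∀ i, (a i ∈ Submodule.span ℂ
      (Set.range (fun j : Fin M => e (Fin.castLE hMN j)))) ↔
      ∀ j ∉ s, ⟪e j, a i⟫_ℂ = 0 := by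
    intro i
    constructor
    · intro hmem' j hj
      have hle : Submodule.span ℂ (Set.range (fun k : Fin M => e (Fin.castLE hMN k))) ≤
          LinearMap.ker ((innerSL ℂ (e j)) : V →ₗ[ℂ] ℂ) := by
        rw [Submodule.span_le]
        rintro x ⟨k, rfl⟩
        have hne : j ≠ Fin.castLE hMN k := by
          rintro rfl
          exact hj (Finset.mem_map.mpr ⟨k, Finset.mem_univ k, rfl⟩)
        simp only [SetLike.mem_coe, LinearMap.mem_ker, ContinuousLinearMap.coe_coe,
          innerSL_apply_apply]
        exact e.orthonormal.2 hne
      exact hle hmem'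
    · intro hz
      rw [← e.sum_repr' (a i)]
      refine Submodule.sum_mem _ fun j _ => ?_
      by_cases hj : j ∈ s
      · obtain ⟨k, -, hk⟩ := Finset.mem_map.mp hj
        simp only [Fin.castLEEmb_apply] at hk
        exact Submodule.smul_mem _ _ (Submodule.subset_span ⟨k, congrArg e hk⟩)
      · rw [hz j hj, zero_smul]; exact Submodule.zero_mem _
  constructor
  · intro h0 i
    rw [hmemspan i]
    intro j hj
    have hterm := (Finset.sum_eq_zero_iff_of_nonneg fun i _ => sq_nonneg _).mp (h0 j hj)
      i (Finset.mem_univ i)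
    have : ‖⟪e j, a i⟫_ℂ‖ = 0 := by
      have := sq_eq_zero_iff.mp hterm
      exact this
    exact norm_eq_zero.mp this
  · intro hmem' j hj
    refine Finset.sum_eq_zero fun i _ => ?_
    rw [(hmemspan i).mp (hmem' i) j hj]
    simp
end

section
/- For a Gibbs distribution over energies E_0 ≤ ... ≤ E_{N-1} where the minimum energy E_0 has multiplicity d_g, the entropy S(β) is strictly decreasing on (0,∞) (assuming not all E_i are equal), with S(0) = ln N and lim_{β→∞} S(β) = ln d_g. Consequently, for every value ℰ with ln d_g < ℰ < ln N there is a unique β > 0 with S(β) = ℰ. -/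
/-- Partition function of the classical Gibbs distribution. -/
noncomputable def gibbsZ (N : ℕ) (E : Fin N → ℝ) (β : ℝ) : ℝ :=
  ∑ i, Real.exp (-β * E i)

/-- Gibbs probability weight `λ_i(β)`. -/
noncomputable def gibbsWeight (N : ℕ) (E : Fin N → ℝ) (β : ℝ) (i : Fin N) : ℝ :=
  Real.exp (-β * E i) / gibbsZ N E β

/-- Shannon entropy `S(β)` of the classical Gibbs distribution. -/
noncomputable def gibbsEntropy (N : ℕ) (E : Fin N → ℝ) (β : ℝ) : ℝ :=
  -∑ i, gibbsWeight N E β i * Real.log (gibbsWeight N E β i)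

/-- Multiplicity `d_g` of the minimum energy. -/
noncomputable def groundDeg (N : ℕ) (E : Fin N → ℝ) : ℕ :=
  (Finset.univ.filter fun i : Fin N => ∀ j, E i ≤ E j).card

namespace Stmt13Aux

variable {N : ℕ} {E : Fin N → ℝ}

lemma Zpos (hN : 0 < N) (E : Fin N → ℝ) (β : ℝ) : 0 < gibbsZ N E β := by
  have : Nonempty (Fin N) := Fin.pos_iff_nonempty.mp hN
  exact Finset.sum_pos (fun i _ => Real.exp_pos _) Finset.univ_nonempty

lemma weight_pos (hN : 0 < N) (β : ℝ) (i : Fin N) : 0 < gibbsWeight N E β i :=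
  div_pos (Real.exp_pos _) (Zpos hN E β)

lemma sum_weight (hN : 0 < N) (β : ℝ) : ∑ i, gibbsWeight N E β i = 1 := by
  unfold gibbsWeight
  rw [← Finset.sum_div]
  exact div_self (Zpos hN E β).ne' 

/-- Strict Gibbs inequality. -/
lemma gibbs_ineq (hN : 0 < N) {p q : Fin N → ℝ} (hp : ∀ i, 0 < p i) (hq : ∀ i, 0 < q i)
    (hps : ∑ i, p i = 1) (hqs : ∑ i, q i = 1) (hne : p ≠ q) :
    ∑ i, p i * Real.log (q i) < ∑ i, p i * Real.log (p i) := by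
  have : Nonempty (Fin N) := Fin.pos_iff_nonempty.mp hN
  have hnc : ∃ j ∈ Finset.univ, ∃ k ∈ (Finset.univ : Finset (Fin N)), q j / p j ≠ q k / p k := by
    by_contra h
    push_neg at h
    apply hne
    obtain ⟨i0⟩ := ‹Nonempty (Fin N)›
    set c := q i0 / p i0 with hc
    have hqc : ∀ i, q i = c * p i := by
      intro i
      have h' := h i (Finset.mem_univ i) i0 (Finset.mem_univ i0)
      rw [div_eq_div_iff (hp i).ne' (hp i0).ne'] at h'
      rw [hc, div_mul_eq_mul_div, eq_div_iff (hp i0).ne']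
      linarith
    have hc1 : c = 1 := by
      have h1 : (1:ℝ) = c := by
        rw [← hqs, Finset.sum_congr rfl fun i _ => hqc i, ← Finset.mul_sum, hps, mul_one]
      linarith
    funext i
    simp [hqc i, hc1]
  have key := strictConcaveOn_log_Ioi.lt_map_sum (t := Finset.univ) (w := p)
    (p := fun i => q i / p i) (fun i _ => hp i) hps
    (fun i _ => div_pos (hq i) (hp i)) hnc
  simp only [smul_eq_mul] at key
  have h1 : ∑ i, p i * (q i / p i) = 1 := by
    rw [← hqs]
    exact Finset.sum_congr rfl fun i _ => by rw [mul_div_assoc'] ; exact mul_div_cancel_left₀ _ (hp i).ne'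
  rw [h1, Real.log_one] at key
  have h2 : ∀ i, p i * Real.log (q i / p i) = p i * Real.log (q i) - p i * Real.log (p i) := by
    intro i
    rw [Real.log_div (hq i).ne' (hp i).ne', mul_sub]
  rw [Finset.sum_congr rfl fun i _ => h2 i, Finset.sum_sub_distrib] at key
  linarith


/-- Mean energy. -/
noncomputable def meanE (N : ℕ) (E : Fin N → ℝ) (β : ℝ) : ℝ :=
  ∑ i, gibbsWeight N E β i * E i

lemma cross_entropy_eq (hN : 0 < N) (β γ : ℝ) :
    -∑ i, gibbsWeight N E β i * Real.log (gibbsWeight N E γ i)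
      = γ * meanE N E β + Real.log (gibbsZ N E γ) := by
  have hZ := Zpos hN E γ
  have hlog : ∀ i, Real.log (gibbsWeight N E γ i)
      = -γ * E i - Real.log (gibbsZ N E γ) := by
    intro i
    rw [gibbsWeight, Real.log_div (Real.exp_ne_zero _) hZ.ne', Real.log_exp]
  have h1 : ∀ i, gibbsWeight N E β i * Real.log (gibbsWeight N E γ i)
      = -(γ * (gibbsWeight N E β i * E i) + Real.log (gibbsZ N E γ) * gibbsWeight N E β i) := by
    intro i; rw [hlog i]; ring
  rw [Finset.sum_congr rfl fun i _ => h1 i, Finset.sum_neg_distrib, neg_neg,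
    Finset.sum_add_distrib, ← Finset.mul_sum, ← Finset.mul_sum, sum_weight hN, mul_one, meanE]

lemma S_eq (hN : 0 < N) (β : ℝ) :
    gibbsEntropy N E β = β * meanE N E β + Real.log (gibbsZ N E β) := by
  rw [gibbsEntropy, cross_entropy_eq hN β β]

set_option maxHeartbeats 1000000 in
lemma weight_ne (hN : 0 < N) (hE : ∃ i j, E i ≠ E j) {β1 β2 : ℝ} (h : β1 ≠ β2) :
    gibbsWeight N E β1 ≠ gibbsWeight N E β2 := by
  intro hpq
  obtain ⟨i, j, hij⟩ := hE
  have hZ1 := Zpos hN E β1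
  have hZ2 := Zpos hN E β2
  have e1 : Real.exp (-β1 * E i) * gibbsZ N E β2 = Real.exp (-β2 * E i) * gibbsZ N E β1 := by
    have := congrFun hpq i
    rw [gibbsWeight, gibbsWeight, div_eq_div_iff hZ1.ne' hZ2.ne'] at this
    exact this
  have e2 : Real.exp (-β1 * E j) * gibbsZ N E β2 = Real.exp (-β2 * E j) * gibbsZ N E β1 := by
    have := congrFun hpq j
    rw [gibbsWeight, gibbsWeight, div_eq_div_iff hZ1.ne' hZ2.ne'] at this
    exact this
  have e3 : Real.exp (-β1 * E i) * Real.exp (-β2 * E j) * gibbsZ N E β2 * gibbsZ N E β1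
      = Real.exp (-β2 * E i) * Real.exp (-β1 * E j) * gibbsZ N E β2 * gibbsZ N E β1 := by
    linear_combination (Real.exp (-β2 * E j) * gibbsZ N E β1) * e1
      - (Real.exp (-β2 * E i) * gibbsZ N E β1) * e2
  have e4 : Real.exp (-β1 * E i) * Real.exp (-β2 * E j)
      = Real.exp (-β2 * E i) * Real.exp (-β1 * E j) :=
    mul_right_cancel₀ hZ2.ne' (mul_right_cancel₀ hZ1.ne' e3)
  rw [← Real.exp_add, ← Real.exp_add, Real.exp_eq_exp] at e4
  have : (β1 - β2) * (E j - E i) = 0 := by linarith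
  rcases mul_eq_zero.mp this with h' | h'
  · exact h (by linarith)
  · exact hij (by linarith)

lemma cross_lt (hN : 0 < N) (hE : ∃ i j, E i ≠ E j) {β1 β2 : ℝ} (h : β1 ≠ β2) :
    gibbsEntropy N E β1 < β2 * meanE N E β1 + Real.log (gibbsZ N E β2) := by
  rw [← cross_entropy_eq hN β1 β2, gibbsEntropy]
  have := gibbs_ineq hN (p := gibbsWeight N E β1) (q := gibbsWeight N E β2)
    (weight_pos hN β1) (weight_pos hN β2) (sum_weight hN β1) (sum_weight hN β2)
    (weight_ne hN hE h)
  linarith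

lemma meanE_anti (hN : 0 < N) (hE : ∃ i j, E i ≠ E j) {β1 β2 : ℝ} (h : β1 < β2) :
    meanE N E β2 < meanE N E β1 := by
  have c1 := cross_lt hN hE h.ne
  have c2 := cross_lt hN hE h.ne'
  rw [S_eq hN β1] at c1
  rw [S_eq hN β2] at c2
  nlinarith [c1, c2, h]

lemma S_strictAnti (hN : 0 < N) (hE : ∃ i j, E i ≠ E j) :
    StrictAntiOn (gibbsEntropy N E) (Set.Ici 0) := by
  intro β1 hβ1 β2 _ h
  have hU := meanE_anti hN hE h
  have c2 := cross_lt hN hE h.ne'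
  rw [S_eq hN β1]
  have : β1 * meanE N E β2 ≤ β1 * meanE N E β1 :=
    mul_le_mul_of_nonneg_left hU.le hβ1
  linarith

lemma S_zero (hN : 0 < N) : gibbsEntropy N E 0 = Real.log N := by
  have hNne : (N:ℝ) ≠ 0 := Nat.cast_ne_zero.mpr hN.ne'
  have hZ : gibbsZ N E 0 = N := by
    simp [gibbsZ]
  rw [gibbsEntropy]
  simp only [gibbsWeight, hZ, neg_zero, zero_mul, Real.exp_zero]
  rw [Finset.sum_const, Finset.card_univ, Fintype.card_fin, nsmul_eq_mul, one_div,
    Real.log_inv]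
  field_simp


lemma S_cont (hN : 0 < N) : Continuous (gibbsEntropy N E) := by
  have hZ : Continuous (gibbsZ N E) := by
    unfold gibbsZ
    exact continuous_finset_sum _ fun i _ =>
      Real.continuous_exp.comp (continuous_id.neg.mul continuous_const)
  have hw : ∀ i, Continuous fun β => gibbsWeight N E β i := by
    intro i
    unfold gibbsWeight
    exact (Real.continuous_exp.comp (continuous_id.neg.mul continuous_const)).div hZ
      fun β => (Zpos hN E β).ne'
  unfold gibbsEntropy
  exact (continuous_finset_sum _ fun i _ => Real.continuous_mul_log.comp (hw i)).neg

lemma S_lim (hN : 0 < N) :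
    Filter.Tendsto (gibbsEntropy N E) Filter.atTop (nhds (Real.log (groundDeg N E))) := by
  have : Nonempty (Fin N) := Fin.pos_iff_nonempty.mp hN
  obtain ⟨i0, hi0⟩ : ∃ i0, ∀ j, E i0 ≤ E j := Finite.exists_min E
  set m := E i0 with hm
  classical
  set c : Fin N → ℝ := fun i => if ∀ j, E i ≤ E j then 1 else 0 with hcdef
  set d : ℝ := (groundDeg N E : ℝ) with hd
  have hdpos : 0 < d := by
    rw [hd, groundDeg]
    exact_mod_cast Finset.card_pos.mpr ⟨i0, by simp; exact hi0⟩
  have hsumc : ∑ i, c i = d := by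
    rw [hcdef, hd, groundDeg]
    rw [Finset.sum_boole]
  have hF : ∀ i : Fin N, Filter.Tendsto (fun β => Real.exp (-β * (E i - m)))
      Filter.atTop (nhds (c i)) := by
    intro i
    by_cases hi : ∀ j, E i ≤ E j
    · have hEm : E i = m := le_antisymm (hi i0) (hi0 i)
      have hc1 : c i = 1 := by simp [hcdef, hi]
      have hfun : (fun β : ℝ => Real.exp (-β * (E i - m))) = fun _ => 1 := by
        funext β; rw [hEm, sub_self, mul_zero, Real.exp_zero]
      rw [hc1, hfun]
      exact tendsto_const_nhds
    · have hpos : 0 < E i - m := by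
        push_neg at hi
        obtain ⟨j, hj⟩ := hi
        have := hi0 j
        linarith
      have h1 : Filter.Tendsto (fun β : ℝ => -β * (E i - m)) Filter.atTop Filter.atBot := by
        have h0 : Filter.Tendsto (fun β : ℝ => β * -(E i - m)) Filter.atTop Filter.atBot :=
          Filter.tendsto_id.atTop_mul_const_of_neg (by linarith)
        exact h0.congr fun β => by ring
      simp only [hcdef, hi, if_false]
      exact Real.tendsto_exp_atBot.comp h1
  have hZt : Filter.Tendsto (fun β => ∑ j, Real.exp (-β * (E j - m)))
      Filter.atTop (nhds d) := by
    have := tendsto_finset_sum Finset.univ (fun j (_ : j ∈ Finset.univ) => hF j)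
    rwa [hsumc] at this
  have hw : ∀ i, Filter.Tendsto (fun β => gibbsWeight N E β i) Filter.atTop
      (nhds (c i / d)) := by
    intro i
    have hrw : ∀ β, gibbsWeight N E β i
        = Real.exp (-β * (E i - m)) / ∑ j, Real.exp (-β * (E j - m)) := by
      intro β
      rw [gibbsWeight, gibbsZ]
      have hnum : ∀ k : Fin N, Real.exp (-β * (E k - m))
          = Real.exp (β * m) * Real.exp (-β * E k) := by
        intro k; rw [← Real.exp_add]; ring_nf
      rw [hnum i, Finset.sum_congr rfl fun k _ => hnum k, ← Finset.mul_sum,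
        mul_div_mul_left _ _ (Real.exp_ne_zero _)]
    simp only [hrw]
    exact (hF i).div hZt hdpos.ne'
  have hmain := tendsto_finset_sum Finset.univ
    (fun i (_ : i ∈ Finset.univ) => (Real.continuous_negMulLog.tendsto _).comp (hw i))
  have hSrw : ∀ β, gibbsEntropy N E β = ∑ i, Real.negMulLog (gibbsWeight N E β i) := by
    intro β
    rw [gibbsEntropy, ← Finset.sum_neg_distrib]
    exact Finset.sum_congr rfl fun i _ => by rw [Real.negMulLog]; ring
  have hval : ∑ i, Real.negMulLog (c i / d) = Real.log (groundDeg N E) := by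
    have h1 : ∀ i : Fin N, Real.negMulLog (c i / d)
        = if (∀ j, E i ≤ E j) then Real.negMulLog (1 / d) else 0 := by
      intro i
      by_cases hi : ∀ j, E i ≤ E j <;> simp [hcdef, hi]
    rw [Finset.sum_congr rfl fun i _ => h1 i, Finset.sum_ite, Finset.sum_const,
      Finset.sum_const, smul_zero, add_zero, nsmul_eq_mul]
    have h2 : Real.negMulLog (1 / d) = (1 / d) * Real.log d := by
      rw [Real.negMulLog, one_div, Real.log_inv]; ring
    have h3 : ((Finset.univ.filter fun i : Fin N => ∀ j, E i ≤ E j).card : ℝ) = d := by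
      rw [hd, groundDeg]
    rw [h2, h3]
    field_simp
    rfl
  refine Filter.Tendsto.congr (fun β => (hSrw β).symm) ?_
  rwa [hval] at hmain

end Stmt13Aux

/-- for a non-constant energy spectrum, the Gibbs entropy `S(β)` is
strictly decreasing on `[0, ∞)`, with `S(0) = ln N` and `S(β) → ln d_g` as `β → ∞`;
hence for each `ℰ ∈ (ln d_g, ln N)` there is a unique `β > 0` with `S(β) = ℰ`. -/
theorem stmt_13 (N : ℕ) (hN : 0 < N) (E : Fin N → ℝ)
    (hE : ∃ i j, E i ≠ E j) :
    StrictAntiOn (gibbsEntropy N E) (Set.Ici 0) ∧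
      gibbsEntropy N E 0 = Real.log N ∧
      Filter.Tendsto (gibbsEntropy N E) Filter.atTop
        (nhds (Real.log (groundDeg N E))) ∧
      ∀ ℰ ∈ Set.Ioo (Real.log (groundDeg N E)) (Real.log N),
        ∃! β : ℝ, 0 < β ∧ gibbsEntropy N E β = ℰ := by
  have hSA := Stmt13Aux.S_strictAnti hN hE
  have hS0 := Stmt13Aux.S_zero (E := E) hN
  have hlim := Stmt13Aux.S_lim (E := E) hN
  refine ⟨hSA, hS0, hlim, ?_⟩
  rintro ℰ ⟨hl, hr⟩
  have hcont := Stmt13Aux.S_cont (E := E) hN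
  have hev : ∀ᶠ β in Filter.atTop, gibbsEntropy N E β < ℰ :=
    hlim.eventually_lt_const hl
  obtain ⟨b, hb1, hb0⟩ : ∃ b : ℝ, gibbsEntropy N E b < ℰ ∧ 0 ≤ b := by
    rcases (hev.and (Filter.eventually_ge_atTop 0)).exists with ⟨b, h1, h2⟩
    exact ⟨b, h1, h2⟩
  have hsub := intermediate_value_Icc' hb0 hcont.continuousOn
  have hmem : ℰ ∈ Set.Icc (gibbsEntropy N E b) (gibbsEntropy N E 0) :=
    ⟨hb1.le, by rw [hS0]; exact hr.le⟩
  obtain ⟨β, hβmem, hβeq⟩ := hsub hmem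
  have hβpos : 0 < β := by
    rcases eq_or_lt_of_le hβmem.1 with h0 | h0
    · exfalso
      rw [← h0, hS0] at hβeq
      exact hr.ne' hβeq
    · exact h0
  refine ⟨β, ⟨hβpos, hβeq⟩, ?_⟩
  rintro β' ⟨hβ'pos, hβ'eq⟩
  exact hSA.injOn hβ'pos.le hβpos.le (by rw [hβ'eq, hβeq])
end

section
/- Minimum energy for fixed Schmidt coefficients: Let H_A, H_B be diagonal Hamiltonians with ordered eigenvalues A_0 ≤ ... ≤ A_{N_A-1} and B_0 ≤ ... ≤ B_{N_B-1} (N_A ≤ N_B), and fix squared Schmidt coefficients λ_0 ≥ λ_1 ≥ ... ≥ λ_{N_A-1} ≥ 0 summing to 1. For any two orthonormal families (a_i) in the A-space and (b_i) in the B-space, ∑_i λ_i (⟨a_i, H_A a_i⟩ + ⟨b_i, H_B b_i⟩) ≥ ∑_i λ_i (A_i + B_i). That is, the product eigenbasis pairing minimizes the energy among all states with the given Schmidt coefficients. -/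
open scoped InnerProductSpace
open Finset

lemma card_filter_lt_fin (M N : ℕ) (h : N ≤ M) :
    (Finset.univ.filter (fun j : Fin M => (j : ℕ) < N)).card = N := by
  have : (Finset.range M).filter (fun x => x < N) = Finset.range N := by
    ext x; simp; omega
  rw [Finset.card_filter]
  rw [Fin.sum_univ_eq_sum_range (fun i => if i < N then 1 else 0)]
  rw [Finset.sum_ite, Finset.sum_const, Finset.sum_const, this]
  simp

lemma rearr {M N : ℕ} (hNM : N ≤ M) (E : Fin M → ℝ) (hE : Monotone E)
    (c : Fin M → ℝ) (hc0 : ∀ j, 0 ≤ c j) (hc1 : ∀ j, c j ≤ 1)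
    (hcs : ∑ j, c j = N) :
    ∑ j ∈ Finset.univ.filter (fun j : Fin M => (j : ℕ) < N), E j ≤ ∑ j, E j * c j := by
  rcases Nat.eq_zero_or_pos N with h0 | hpos
  · subst h0
    have : ∀ j, c j = 0 := by
      intro j
      have := Finset.sum_eq_zero_iff_of_nonneg (fun j _ => hc0 j) |>.mp (by simpa using hcs) j
        (Finset.mem_univ j)
      exact this
    have h1 : (Finset.univ.filter (fun j : Fin M => (j : ℕ) < 0)) = ∅ := by
      ext j; simp
    rw [h1, Finset.sum_empty]
    exact Finset.sum_nonneg fun j _ => by rw [this j]; ring_nf; exact le_refl 0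
  · set t : ℝ := E ⟨N - 1, by omega⟩ with ht
    set d : Fin M → ℝ := fun j => if (j : ℕ) < N then 1 else 0 with hd
    have hds : ∑ j, d j = N := by
      rw [hd, Finset.sum_ite, Finset.sum_const, Finset.sum_const,
        card_filter_lt_fin M N hNM]
      simp
    have hEd : ∑ j, E j * d j = ∑ j ∈ Finset.univ.filter (fun j : Fin M => (j : ℕ) < N), E j := by
      rw [Finset.sum_filter]
      refine Finset.sum_congr rfl fun j _ => ?_
      by_cases hj : (j : ℕ) < N <;> simp [hd, hj]
    have key : 0 ≤ ∑ j, (E j - t) * (c j - d j) := by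
      refine Finset.sum_nonneg fun j _ => ?_
      by_cases hj : (j : ℕ) < N
      · have hEj : E j ≤ t := hE (by rw [Fin.le_def]; simp; omega)
        have hdj : d j = 1 := by simp [hd, hj]
        have : c j - d j ≤ 0 := by rw [hdj]; linarith [hc1 j]
        nlinarith [hc1 j]
      · have hEj : t ≤ E j := hE (by rw [Fin.le_def]; simp; omega)
        have hdj : d j = 0 := by simp [hd, hj]
        exact mul_nonneg (by linarith) (by rw [hdj]; linarith [hc0 j])
    have expand : ∑ j, (E j - t) * (c j - d j)
        = ∑ j, E j * c j - ∑ j, E j * d j - t * (∑ j, c j) + t * (∑ j, d j) := by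
      rw [Finset.mul_sum, Finset.mul_sum, ← Finset.sum_sub_distrib, ← Finset.sum_sub_distrib,
        ← Finset.sum_add_distrib]
      exact Finset.sum_congr rfl fun j _ => by ring
    rw [expand, hcs, hds, hEd] at key
    linarith

lemma quad_form {V : Type*} [NormedAddCommGroup V] [InnerProductSpace ℂ V] {M : ℕ}
    (e : OrthonormalBasis (Fin M) ℂ V) (H : V →ₗ[ℂ] V) (E : Fin M → ℝ)
    (heig : ∀ j, H (e j) = (E j : ℂ) • e j) (x : V) :
    (⟪x, H x⟫_ℂ).re = ∑ j, E j * Complex.normSq (e.repr x j) := by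
  have hx : H x = ∑ j, e.repr x j • ((E j : ℂ) • e j) := by
    conv_lhs => rw [← e.sum_repr x]
    rw [map_sum]
    simp [heig]
  rw [hx, inner_sum, Complex.re_sum]
  refine Finset.sum_congr rfl fun j _ => ?_
  rw [inner_smul_right, inner_smul_right]
  have h1 : ⟪x, e j⟫_ℂ = starRingEnd ℂ (e.repr x j) := by
    rw [e.repr_apply_apply, inner_conj_symm]
  rw [h1]
  have : e.repr x j * ((E j : ℂ) * starRingEnd ℂ (e.repr x j))
      = (E j : ℂ) * (e.repr x j * starRingEnd ℂ (e.repr x j)) := by ring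
  rw [this, Complex.mul_conj]
  simp
lemma proj_bound {V : Type*} [NormedAddCommGroup V] [InnerProductSpace ℂ V] {M K : ℕ}
    (hK : K ≤ M) (e : OrthonormalBasis (Fin M) ℂ V) (H : V →ₗ[ℂ] V) (E : Fin M → ℝ)
    (hE : Monotone E) (heig : ∀ j, H (e j) = (E j : ℂ) • e j)
    (a : Fin K → V) (ha : Orthonormal ℂ a) (N : ℕ) (hNK : N ≤ K) :
    ∑ j ∈ Finset.univ.filter (fun j : Fin M => (j : ℕ) < N), E j
      ≤ ∑ i ∈ Finset.univ.filter (fun i : Fin K => (i : ℕ) < N), (⟪a i, H (a i)⟫_ℂ).re := by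
  set S := Finset.univ.filter (fun i : Fin K => (i : ℕ) < N) with hS
  have hScard : S.card = N := card_filter_lt_fin K N hNK
  set c : Fin M → ℝ := fun j => ∑ i ∈ S, Complex.normSq (e.repr (a i) j) with hc
  have hnorm : ∀ i : Fin K, ∀ j : Fin M,
      Complex.normSq (e.repr (a i) j) = ‖⟪a i, e j⟫_ℂ‖ ^ 2 := by
    intro i j
    rw [e.repr_apply_apply]
    rw [← inner_conj_symm (a i) (e j)]
    rw [RCLike.norm_conj, ← Complex.sq_norm]
  have hc1 : ∀ j, c j ≤ 1 := by
    intro j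
    rw [hc]
    simp only
    calc ∑ i ∈ S, Complex.normSq (e.repr (a i) j)
        = ∑ i ∈ S, ‖⟪a i, e j⟫_ℂ‖ ^ 2 := Finset.sum_congr rfl fun i _ => hnorm i j
      _ ≤ ‖e j‖ ^ 2 := ha.sum_inner_products_le (e j)
      _ = 1 := by rw [e.orthonormal.1 j]; norm_num
  have hc0 : ∀ j, 0 ≤ c j := fun j => Finset.sum_nonneg fun i _ => Complex.normSq_nonneg _
  have hrepr_sum : ∀ x : V, ∑ j, Complex.normSq (e.repr x j) = ‖x‖ ^ 2 := by
    intro x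
    have h1 : ‖e.repr x‖ = ‖x‖ := e.repr.norm_map x
    have h2 : ‖e.repr x‖ ^ 2 = ∑ j, ‖e.repr x j‖ ^ 2 := by
      rw [EuclideanSpace.norm_eq]
      rw [Real.sq_sqrt (Finset.sum_nonneg fun j _ => sq_nonneg _)]
    rw [← h1, h2]
    exact Finset.sum_congr rfl fun j _ => (Complex.normSq_eq_norm_sq _).trans (by norm_num)
  have hcs : ∑ j, c j = N := by
    rw [hc]
    rw [Finset.sum_comm]
    have : ∀ i ∈ S, ∑ j, Complex.normSq (e.repr (a i) j) = 1 := by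
      intro i _
      rw [hrepr_sum (a i), ha.1 i]; norm_num
    rw [Finset.sum_congr rfl this]
    simp [hScard]
  have hquad : ∀ i ∈ S, (⟪a i, H (a i)⟫_ℂ).re = ∑ j, E j * Complex.normSq (e.repr (a i) j) :=
    fun i _ => quad_form e H E heig (a i)
  rw [Finset.sum_congr rfl hquad, Finset.sum_comm]
  calc ∑ j ∈ Finset.univ.filter (fun j : Fin M => (j : ℕ) < N), E j
      ≤ ∑ j, E j * c j := rearr (hNK.trans hK) E hE c hc0 hc1 hcs
    _ = ∑ j, ∑ i ∈ S, E j * Complex.normSq (e.repr (a i) j) := by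
        refine Finset.sum_congr rfl fun j _ => ?_
        rw [hc, Finset.mul_sum]
lemma abel_nonneg (l D : ℕ → ℝ) (hl : ∀ n, l (n + 1) ≤ l n) (hl0 : ∀ n, 0 ≤ l n)
    (hD : ∀ N, 0 ≤ ∑ i ∈ Finset.range N, D i) (n : ℕ) :
    0 ≤ ∑ i ∈ Finset.range n, l i * D i := by
  have hby := Finset.sum_range_by_parts l D n
  simp only [smul_eq_mul] at hby
  rw [hby]
  have h1 : 0 ≤ l (n - 1) * ∑ i ∈ Finset.range n, D i := mul_nonneg (hl0 _) (hD n)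
  have h2 : ∑ i ∈ Finset.range (n - 1), (l (i + 1) - l i) * ∑ j ∈ Finset.range (i + 1), D j ≤ 0 :=
    Finset.sum_nonpos fun i _ => mul_nonpos_of_nonpos_of_nonneg (by linarith [hl i]) (hD (i + 1))
  linarith
lemma sum_range_dite {K : ℕ} (N : ℕ) (hNK : N ≤ K) (F : Fin K → ℝ) :
    ∑ n ∈ Finset.range N, (if h : n < K then F ⟨n, h⟩ else 0)
      = ∑ i ∈ Finset.univ.filter (fun i : Fin K => (i : ℕ) < N), F i := by
  have e1 : ∑ n ∈ Finset.range N, (if h : n < K then F ⟨n, h⟩ else 0)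
      = ∑ n ∈ Finset.range K,
          (if n < N then (if h : n < K then F ⟨n, h⟩ else 0) else 0) := by
    rw [Finset.sum_congr rfl
      (fun n hn => (if_pos (Finset.mem_range.mp hn)).symm :
        ∀ n ∈ Finset.range N, (if h : n < K then F ⟨n, h⟩ else 0)
          = if n < N then (if h : n < K then F ⟨n, h⟩ else 0) else 0)]
    exact Finset.sum_subset (Finset.range_subset_range.mpr hNK)
      (fun x _ hx => if_neg (fun h => hx (Finset.mem_range.mpr h)))
  rw [e1, ← Fin.sum_univ_eq_sum_range
    (fun n => if n < N then (if h : n < K then F ⟨n, h⟩ else 0) else 0) K,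
    Finset.sum_filter]
  exact Finset.sum_congr rfl fun i _ => by simp [i.isLt]

/-- minimum energy for fixed Schmidt coefficients. With local
Hamiltonians `H_A`, `H_B` having orthonormal eigenbases and increasingly ordered
eigenvalues `A`, `B`, and decreasing nonnegative Schmidt weights `l` summing to 1,
any pair of orthonormal families `a`, `b` satisfies
`∑ i, l i (⟨a i, H_A a i⟩ + ⟨b i, H_B b i⟩) ≥ ∑ i, l i (A i + B i)`. -/

theorem stmt_19 {VA VB : Type*} [NormedAddCommGroup VA] [InnerProductSpace ℂ VA]
    [NormedAddCommGroup VB] [InnerProductSpace ℂ VB]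
    (NA NB : ℕ) (hN : NA ≤ NB)
    (eA : OrthonormalBasis (Fin NA) ℂ VA) (eB : OrthonormalBasis (Fin NB) ℂ VB)
    (HA : VA →ₗ[ℂ] VA) (HB : VB →ₗ[ℂ] VB) (A : Fin NA → ℝ) (B : Fin NB → ℝ)
    (hA : Monotone A) (hB : Monotone B)
    (heigA : ∀ i, HA (eA i) = (A i : ℂ) • eA i)
    (heigB : ∀ j, HB (eB j) = (B j : ℂ) • eB j)
    (l : Fin NA → ℝ) (hl : Antitone l) (hl0 : ∀ i, 0 ≤ l i) (hlsum : ∑ i, l i = 1)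
    (a : Fin NA → VA) (ha : Orthonormal ℂ a)
    (b : Fin NA → VB) (hb : Orthonormal ℂ b) :
    ∑ i, l i * (A i + B (Fin.castLE hN i))
      ≤ ∑ i, l i * ((⟪a i, HA (a i)⟫_ℂ).re + (⟪b i, HB (b i)⟫_ℂ).re) := by
  classical
  set f : Fin NA → ℝ := fun i => (⟪a i, HA (a i)⟫_ℂ).re + (⟪b i, HB (b i)⟫_ℂ).re with hf
  set g : Fin NA → ℝ := fun i => A i + B (Fin.castLE hN i) with hg
  set l' : ℕ → ℝ := fun n => if h : n < NA then l ⟨n, h⟩ else 0 with hl'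
  set D : ℕ → ℝ := fun n => if h : n < NA then f ⟨n, h⟩ - g ⟨n, h⟩ else 0 with hD
  -- partial sums of D are nonneg
  have hpartial : ∀ N', N' ≤ NA →
      ∑ i ∈ Finset.univ.filter (fun i : Fin NA => (i : ℕ) < N'), g i
        ≤ ∑ i ∈ Finset.univ.filter (fun i : Fin NA => (i : ℕ) < N'), f i := by
    intro N' hN'
    have hAside := proj_bound (le_refl NA) eA HA A hA heigA a ha N' hN'
    have hBside := proj_bound hN eB HB B hB heigB b hb N' hN'
    have hBsum : ∑ j ∈ Finset.univ.filter (fun j : Fin NB => (j : ℕ) < N'), B j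
        = ∑ i ∈ Finset.univ.filter (fun i : Fin NA => (i : ℕ) < N'), B (Fin.castLE hN i) := by
      have himg : Finset.univ.filter (fun j : Fin NB => (j : ℕ) < N')
          = (Finset.univ.filter (fun i : Fin NA => (i : ℕ) < N')).image (Fin.castLE hN) := by
        ext j
        simp only [Finset.mem_filter, Finset.mem_image, Finset.mem_univ, true_and]
        constructor
        · intro hj
          exact ⟨⟨(j : ℕ), by omega⟩, hj, by apply Fin.ext; rfl⟩
        · rintro ⟨i, hi, rfl⟩
          simpa using hi
      rw [himg, Finset.sum_image (fun x _ y _ h => Fin.castLE_injective hN h)]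
    simp only [hg, hf]
    rw [Finset.sum_add_distrib, Finset.sum_add_distrib]
    have := hBsum ▸ hBside
    exact add_le_add hAside (hBsum ▸ hBside)
  have hDpart : ∀ N', 0 ≤ ∑ n ∈ Finset.range N', D n := by
    intro N'
    set N'' := min N' NA with hN''
    have e1 : ∑ n ∈ Finset.range N', D n = ∑ n ∈ Finset.range N'', D n := by
      refine (Finset.sum_subset (Finset.range_subset_range.mpr (min_le_left _ _)) ?_).symm
      intro x hx hx'
      rw [Finset.mem_range] at hx hx'
      simp only [hD]
      exact dif_neg (by omega)
    rw [e1]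
    have e2 : ∑ n ∈ Finset.range N'', D n
        = ∑ i ∈ Finset.univ.filter (fun i : Fin NA => (i : ℕ) < N''), (f i - g i) := by
      simp only [hD]
      exact sum_range_dite N'' (min_le_right _ _) (fun i => f i - g i)
    rw [e2, Finset.sum_sub_distrib, sub_nonneg]
    exact hpartial N'' (min_le_right _ _)
  -- Abel summation
  have habel : 0 ≤ ∑ n ∈ Finset.range NA, l' n * D n := by
    refine abel_nonneg l' D ?_ ?_ hDpart NA
    · intro n
      simp only [hl']
      by_cases h1 : n + 1 < NA
      · rw [dif_pos h1, dif_pos (by omega)]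
        exact hl (by rw [Fin.le_def]; simp)
      · rw [dif_neg h1]
        by_cases h2 : n < NA
        · rw [dif_pos h2]; exact hl0 _
        · rw [dif_neg h2]
    · intro n
      simp only [hl']
      by_cases h2 : n < NA
      · rw [dif_pos h2]; exact hl0 _
      · rw [dif_neg h2]
  have e3 : ∑ n ∈ Finset.range NA, l' n * D n = ∑ i : Fin NA, l i * (f i - g i) := by
    have e4 : ∑ n ∈ Finset.range NA, l' n * D n
        = ∑ n ∈ Finset.range NA, (if h : n < NA then l ⟨n, h⟩ * (f ⟨n, h⟩ - g ⟨n, h⟩) else 0) := by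
      refine Finset.sum_congr rfl fun n hn => ?_
      have hn' : n < NA := Finset.mem_range.mp hn
      simp only [hl', hD]
      rw [dif_pos hn', dif_pos hn', dif_pos hn']
    rw [e4, sum_range_dite NA (le_refl NA) (fun i => l i * (f i - g i))]
    have : Finset.univ.filter (fun i : Fin NA => (i : ℕ) < NA) = Finset.univ := by
      ext i; simp [i.isLt]
    rw [this]
  rw [e3] at habel
  have : ∑ i : Fin NA, l i * (f i - g i) = ∑ i, l i * f i - ∑ i, l i * g i := by
    rw [← Finset.sum_sub_distrib]
    exact Finset.sum_congr rfl fun i _ => by ring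
  rw [this] at habel
  linarith
end
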